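/- arXiv:1408.0695 — 5 statements merged into one kernel-verified Lean document; each statement's English description precedes it below -/
import Mathlib

section
/- Consider one patch of the SEIR model with a continuous nonnegative force of infection F : [0,∞) → ℝ: differentiable functions S, E, I, R on [0,∞) satisfy S'(t) = -S(t)F(t) - μS(t) + (1-δ)μN₀, E'(t) = S(t)F(t) - (μ+φ)E(t), I'(t) = φE(t) - (μ+γ)I(t), R'(t) = γI(t) - μR(t) + δμN₀, where μ, φ, γ > 0, δ ∈ (0,1), and N₀ = S(0)+E(0)+I(0)+R(0). If S(0), E(0), I(0), R(0) > 0, then for all t ≥ 0 each of S(t), E(t), I(t), R(t) lies in the interval (0, N₀]. -/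
/-- Auxiliary positivity lemma: if `X' = g` on `[0,T]` with `g + c·X ≥ 0` whenever `X ≥ 0`,
and `X 0 > 0`, then `X > 0` on `[0,T]`. -/
lemma seir_aux_pos (T c : ℝ) (X g : ℝ → ℝ)
    (hX : ∀ s ∈ Set.Icc (0:ℝ) T, HasDerivWithinAt X (g s) (Set.Icc 0 T) s)
    (hg : ∀ s ∈ Set.Icc (0:ℝ) T, 0 ≤ X s → 0 ≤ g s + c * X s)
    (h0 : 0 < X 0) : ∀ s ∈ Set.Icc (0:ℝ) T, 0 < X s := by
  by_contra h
  push_neg at h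
  obtain ⟨t₀, ht₀, ht₀X⟩ := h
  have hT : (0:ℝ) ≤ T := ht₀.1.trans ht₀.2
  have hXc : ContinuousOn X (Set.Icc 0 T) := fun s hs => (hX s hs).continuousWithinAt
  set A : Set ℝ := Set.Icc (0:ℝ) T ∩ X ⁻¹' Set.Iic 0 with hA
  have hAclosed : IsClosed A :=
    hXc.preimage_isClosed_of_isClosed isClosed_Icc isClosed_Iic
  have hAne : A.Nonempty := ⟨t₀, ht₀, ht₀X⟩
  have hAbdd : BddBelow A := ⟨0, fun x hx => hx.1.1⟩
  set τ := sInf A with hτ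
  have hτA : τ ∈ A := hAclosed.csInf_mem hAne hAbdd
  have hτIcc : τ ∈ Set.Icc (0:ℝ) T := hτA.1
  have hτX : X τ ≤ 0 := hτA.2
  -- X is positive strictly before τ
  have hpos : ∀ s ∈ Set.Ico (0:ℝ) τ, 0 < X s := by
    intro s hs
    by_contra hXs
    push_neg at hXs
    have hsA : s ∈ A := ⟨⟨hs.1, hs.2.le.trans hτIcc.2⟩, hXs⟩
    exact absurd (csInf_le hAbdd hsA) (not_le.mpr hs.2)
  -- the auxiliary function exp(c s) * X s
  set G : ℝ → ℝ := fun s => Real.exp (c * s) * X s with hGdef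
  have hG : ∀ s ∈ Set.Icc (0:ℝ) T,
      HasDerivWithinAt G (Real.exp (c * s) * (g s + c * X s)) (Set.Icc 0 T) s := by
    intro s hs
    have h1 : HasDerivAt (fun u => Real.exp (c * u)) (Real.exp (c * s) * c) s := by
      simpa [Function.comp_def] using (Real.hasDerivAt_exp (c * s)).comp s ((hasDerivAt_id s).const_mul c)
    have := (h1.hasDerivWithinAt (s := Set.Icc (0:ℝ) T)).mul (hX s hs)
    exact this.congr_deriv (by ring)
  have hGcT : ContinuousOn G (Set.Icc 0 T) := fun s hs => (hG s hs).continuousWithinAt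
  have hGc : ContinuousOn G (Set.Icc 0 τ) :=
    hGcT.mono (Set.Icc_subset_Icc le_rfl hτIcc.2)
  have hmono : MonotoneOn G (Set.Icc 0 τ) := by
    apply monotoneOn_of_deriv_nonneg (convex_Icc 0 τ) hGc
    · intro x hx
      rw [interior_Icc] at hx
      have hxT : x ∈ Set.Icc (0:ℝ) T := ⟨hx.1.le, hx.2.le.trans hτIcc.2⟩
      have hnhds : Set.Icc (0:ℝ) T ∈ nhds x :=
        Icc_mem_nhds hx.1 (lt_of_lt_of_le hx.2 hτIcc.2)
      exact ((hG x hxT).hasDerivAt hnhds).differentiableAt.differentiableWithinAt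
    · intro x hx
      rw [interior_Icc] at hx
      have hxT : x ∈ Set.Icc (0:ℝ) T := ⟨hx.1.le, hx.2.le.trans hτIcc.2⟩
      have hnhds : Set.Icc (0:ℝ) T ∈ nhds x :=
        Icc_mem_nhds hx.1 (lt_of_lt_of_le hx.2 hτIcc.2)
      have hd := ((hG x hxT).hasDerivAt hnhds).deriv
      rw [hd]
      have hXx : 0 ≤ X x := (hpos x ⟨hx.1.le, hx.2⟩).le
      exact mul_nonneg (Real.exp_nonneg _) (hg x hxT hXx)
  have h0τ : (0:ℝ) ∈ Set.Icc (0:ℝ) τ := ⟨le_rfl, hτIcc.1⟩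
  have hττ : τ ∈ Set.Icc (0:ℝ) τ := ⟨hτIcc.1, le_rfl⟩
  have := hmono h0τ hττ hτIcc.1
  have hG0 : G 0 = X 0 := by simp [hGdef]
  have hGτpos : 0 < G τ := lt_of_lt_of_le (hG0 ▸ h0) this
  have he : 0 < Real.exp (c * τ) := Real.exp_pos _
  rcases mul_pos_iff.mp hGτpos with ⟨_, h⟩ | ⟨h, _⟩
  · linarith
  · linarith

/-- Constancy of the total population on `[0,T]`. -/
lemma seir_aux_const (T μ N₀ : ℝ) (hμ : 0 < μ) (N : ℝ → ℝ)
    (hN : ∀ s ∈ Set.Icc (0:ℝ) T, HasDerivWithinAt N (μ * N₀ - μ * N s) (Set.Icc 0 T) s)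
    (hN0 : N 0 = N₀) : ∀ s ∈ Set.Icc (0:ℝ) T, N s = N₀ := by
  intro s hs
  set H : ℝ → ℝ := fun u => Real.exp (μ * u) * (N u - N₀) with hHdef
  have hH : ∀ u ∈ Set.Icc (0:ℝ) T, HasDerivWithinAt H 0 (Set.Icc 0 T) u := by
    intro u hu
    have h1 : HasDerivAt (fun v => Real.exp (μ * v)) (Real.exp (μ * u) * μ) u := by
      simpa [Function.comp_def] using (Real.hasDerivAt_exp (μ * u)).comp u ((hasDerivAt_id u).const_mul μ)
    have h2 : HasDerivWithinAt (fun v => N v - N₀) (μ * N₀ - μ * N u) (Set.Icc 0 T) u :=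
      (hN u hu).sub_const _
    have := (h1.hasDerivWithinAt (s := Set.Icc (0:ℝ) T)).mul h2
    exact this.congr_deriv (by ring)
  have hHc : ContinuousOn H (Set.Icc 0 T) := fun u hu => (hH u hu).continuousWithinAt
  have hdiff : DifferentiableOn ℝ H (interior (Set.Icc (0:ℝ) T)) := by
    intro x hx
    rw [interior_Icc] at hx
    have hnhds : Set.Icc (0:ℝ) T ∈ nhds x := Icc_mem_nhds hx.1 hx.2
    exact ((hH x ⟨hx.1.le, hx.2.le⟩).hasDerivAt hnhds).differentiableAt.differentiableWithinAt
  have hderiv0 : ∀ x ∈ interior (Set.Icc (0:ℝ) T), deriv H x = 0 := by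
    intro x hx
    rw [interior_Icc] at hx
    have hnhds : Set.Icc (0:ℝ) T ∈ nhds x := Icc_mem_nhds hx.1 hx.2
    exact ((hH x ⟨hx.1.le, hx.2.le⟩).hasDerivAt hnhds).deriv
  have hmono : MonotoneOn H (Set.Icc 0 T) :=
    monotoneOn_of_deriv_nonneg (convex_Icc 0 T) hHc hdiff (fun x hx => (hderiv0 x hx).ge)
  have hanti : AntitoneOn H (Set.Icc 0 T) :=
    antitoneOn_of_deriv_nonpos (convex_Icc 0 T) hHc hdiff (fun x hx => (hderiv0 x hx).le)
  have h0m : (0:ℝ) ∈ Set.Icc (0:ℝ) T := ⟨le_rfl, hs.1.trans hs.2⟩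
  have h1 := hmono h0m hs hs.1
  have h2 := hanti h0m hs hs.1
  have hH0 : H 0 = 0 := by simp [hHdef, hN0]
  have hHs : H s = 0 := le_antisymm (hH0 ▸ h2) (hH0 ▸ h1)
  have he : 0 < Real.exp (μ * s) := Real.exp_pos _
  have : N s - N₀ = 0 := by
    by_contra hne
    have : H s ≠ 0 := mul_ne_zero he.ne' hne
    exact this hHs
  linarith

/-- Positive invariance and boundedness of the single-patch SEIR model with vaccination:
with continuous nonnegative force of infection `F` and positive initial data, every class
stays in `(0, N₀]` for all `t ≥ 0`, where `N₀` is the (constant) initial total population. -/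
theorem seir_positively_invariant_bounded
    (μ φ γ δ : ℝ) (hμ : 0 < μ) (hφ : 0 < φ) (hγ : 0 < γ)
    (hδ0 : 0 < δ) (hδ1 : δ < 1)
    (S E I R F : ℝ → ℝ)
    (hFcont : ContinuousOn F (Set.Ici 0)) (hFnonneg : ∀ t ∈ Set.Ici (0 : ℝ), 0 ≤ F t)
    (N₀ : ℝ) (hN₀ : N₀ = S 0 + E 0 + I 0 + R 0)
    (hS : ∀ t ∈ Set.Ici (0 : ℝ),
      HasDerivWithinAt S (-(S t) * F t - μ * S t + (1 - δ) * μ * N₀) (Set.Ici 0) t)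
    (hE : ∀ t ∈ Set.Ici (0 : ℝ),
      HasDerivWithinAt E (S t * F t - (μ + φ) * E t) (Set.Ici 0) t)
    (hI : ∀ t ∈ Set.Ici (0 : ℝ),
      HasDerivWithinAt I (φ * E t - (μ + γ) * I t) (Set.Ici 0) t)
    (hR : ∀ t ∈ Set.Ici (0 : ℝ),
      HasDerivWithinAt R (γ * I t - μ * R t + δ * μ * N₀) (Set.Ici 0) t)
    (hS0 : 0 < S 0) (hE0 : 0 < E 0) (hI0 : 0 < I 0) (hR0 : 0 < R 0) :
    ∀ t ≥ (0 : ℝ),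
      S t ∈ Set.Ioc 0 N₀ ∧ E t ∈ Set.Ioc 0 N₀ ∧ I t ∈ Set.Ioc 0 N₀ ∧ R t ∈ Set.Ioc 0 N₀ := by
  intro T hT
  have hN₀pos : 0 < N₀ := by rw [hN₀]; linarith
  have hsub : Set.Icc (0:ℝ) T ⊆ Set.Ici (0:ℝ) := fun x hx => hx.1
  -- bound F on [0,T]
  obtain ⟨M, hMmem, hM⟩ := isCompact_Icc.exists_isMaxOn (α := ℝ)
    ⟨0, ⟨le_rfl, hT⟩⟩ (hFcont.mono hsub)
  have hMb : ∀ s ∈ Set.Icc (0:ℝ) T, F s ≤ F M := fun s hs => hM hs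
  -- positivity of S
  have hSpos : ∀ s ∈ Set.Icc (0:ℝ) T, 0 < S s := by
    apply seir_aux_pos T (F M + μ) S
      (fun s => -(S s) * F s - μ * S s + (1 - δ) * μ * N₀)
      (fun s hs => (hS s (hsub hs)).mono hsub)
    · intro s hs hXs
      have h1 : F s ≤ F M := hMb s hs
      have h2 : 0 ≤ F s := hFnonneg s (hsub hs)
      nlinarith [mul_nonneg (sub_nonneg.2 h1) hXs,
        mul_pos (mul_pos (sub_pos.2 hδ1) hμ) hN₀pos]
    · exact hS0
  -- positivity of E
  have hEpos : ∀ s ∈ Set.Icc (0:ℝ) T, 0 < E s := by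
    apply seir_aux_pos T (μ + φ) E (fun s => S s * F s - (μ + φ) * E s)
      (fun s hs => (hE s (hsub hs)).mono hsub)
    · intro s hs _
      have h1 : 0 < S s := hSpos s hs
      have h2 : 0 ≤ F s := hFnonneg s (hsub hs)
      nlinarith
    · exact hE0
  -- positivity of I
  have hIpos : ∀ s ∈ Set.Icc (0:ℝ) T, 0 < I s := by
    apply seir_aux_pos T (μ + γ) I (fun s => φ * E s - (μ + γ) * I s)
      (fun s hs => (hI s (hsub hs)).mono hsub)
    · intro s hs _
      have h1 : 0 < E s := hEpos s hs
      nlinarith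
    · exact hI0
  -- positivity of R
  have hRpos : ∀ s ∈ Set.Icc (0:ℝ) T, 0 < R s := by
    apply seir_aux_pos T μ R (fun s => γ * I s - μ * R s + δ * μ * N₀)
      (fun s hs => (hR s (hsub hs)).mono hsub)
    · intro s hs _
      have h1 : 0 < I s := hIpos s hs
      nlinarith [mul_pos hγ h1, mul_pos (mul_pos hδ0 hμ) hN₀pos]
    · exact hR0
  -- total population constant
  have hNconst : ∀ s ∈ Set.Icc (0:ℝ) T, S s + E s + I s + R s = N₀ := by
    apply seir_aux_const T μ N₀ hμ (fun s => S s + E s + I s + R s)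
    · intro s hs
      have hd := (((((hS s (hsub hs)).add (hE s (hsub hs))).add
        (hI s (hsub hs))).add (hR s (hsub hs))).mono hsub)
      exact hd.congr_deriv (by ring)
    · linarith [hN₀]
  have hTm : T ∈ Set.Icc (0:ℝ) T := ⟨hT, le_rfl⟩
  have hST := hSpos T hTm
  have hET := hEpos T hTm
  have hIT := hIpos T hTm
  have hRT := hRpos T hTm
  have hNT := hNconst T hTm
  exact ⟨⟨hST, by linarith⟩, ⟨hET, by linarith⟩, ⟨hIT, by linarith⟩, ⟨hRT, by linarith⟩⟩
end

section
/- Let μ, γ, φ, β > 0, α ∈ [0,1], δ₁, δ₂ ∈ [0,1). Let F be the 4×4 real matrix with rows (0, β(1-δ₁), 0, βα(1-δ₁)), (0,0,0,0), (0, βα(1-δ₂), 0, β(1-δ₂)), (0,0,0,0), and let V be the 4×4 matrix with rows (μ+φ, 0, 0, 0), (-φ, μ+γ, 0, 0), (0, 0, μ+φ, 0), (0, 0, -φ, μ+γ). Then V is invertible and the spectral radius of F·V⁻¹ equals βφ((1-δ₁)+(1-δ₂)+√(4α²(1-δ₁)(1-δ₂)+(δ₁-δ₂)²))/(2(μ+φ)(μ+γ)).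 -/
open Matrix

private lemma det_aux (x1 x2 x3 x4 y1 y2 y3 y4 k : ℂ) :
    (algebraMap ℂ (Matrix (Fin 4) (Fin 4) ℂ) k -
      !![x1, x2, x3, x4; 0,0,0,0; y1,y2,y3,y4; 0,0,0,0]).det =
    k^2 * ((k - x1) * (k - y3) - x3 * y1) := by
  simp [Matrix.det_succ_row_zero, Fin.sum_univ_succ,
    Matrix.algebraMap_matrix_apply, Fin.succAbove]
  ring

private lemma spectrum_aux (x1 x2 x3 x4 y1 y2 y3 y4 r s : ℂ)
    (hsum : x1 + y3 = r + s) (hprod : x1 * y3 - x3 * y1 = r * s) :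
    spectrum ℂ (!![x1, x2, x3, x4; 0,0,0,0; y1,y2,y3,y4; 0,0,0,0]) = {0, r, s} := by
  ext k
  rw [spectrum.mem_iff, Matrix.isUnit_iff_isUnit_det, isUnit_iff_ne_zero, not_ne_iff,
    det_aux]
  have key : (k - x1) * (k - y3) - x3 * y1 = (k - r) * (k - s) := by
    linear_combination (-k) * hsum + hprod
  rw [key]
  simp [mul_eq_zero, sub_eq_zero, pow_eq_zero_iff, Set.mem_insert_iff, or_assoc]

set_option maxHeartbeats 1000000 in
/-- Next-generation method for the rescaled two-patch SEIR system: the transition matrix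
`V` is invertible, and the spectral radius of the next-generation matrix `F·V⁻¹` equals
`βφ((1-δ₁)+(1-δ₂)+√(4α²(1-δ₁)(1-δ₂)+(δ₁-δ₂)²))/(2(μ+φ)(μ+γ))`, the control
reproduction number `R_C`. -/
theorem next_generation_spectral_radius
    (μ γ φ β α δ₁ δ₂ : ℝ)
    (hμ : 0 < μ) (hγ : 0 < γ) (hφ : 0 < φ) (hβ : 0 < β)
    (hα : α ∈ Set.Icc (0 : ℝ) 1)
    (hδ₁ : δ₁ ∈ Set.Ico (0 : ℝ) 1) (hδ₂ : δ₂ ∈ Set.Ico (0 : ℝ) 1)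
    (F V : Matrix (Fin 4) (Fin 4) ℝ)
    (hF : F = !![0, β * (1 - δ₁), 0, β * α * (1 - δ₁);
                 0, 0, 0, 0;
                 0, β * α * (1 - δ₂), 0, β * (1 - δ₂);
                 0, 0, 0, 0])
    (hV : V = !![μ + φ, 0, 0, 0;
                 -φ, μ + γ, 0, 0;
                 0, 0, μ + φ, 0;
                 0, 0, -φ, μ + γ]) :
    IsUnit V ∧
      spectralRadius ℂ ((F * V⁻¹).map (Complex.ofReal : ℝ → ℂ)) =
        ENNReal.ofReal
          (β * φ * ((1 - δ₁) + (1 - δ₂) +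
              Real.sqrt (4 * α ^ 2 * (1 - δ₁) * (1 - δ₂) + (δ₁ - δ₂) ^ 2)) /
            (2 * (μ + φ) * (μ + γ))) := by
  obtain ⟨hα0, hα1⟩ := hα
  obtain ⟨hδ₁0, hδ₁1⟩ := hδ₁
  obtain ⟨hδ₂0, hδ₂1⟩ := hδ₂
  have h1 : μ + φ ≠ 0 := by positivity
  have h2 : μ + γ ≠ 0 := by positivity
  have e1 : (0:ℝ) < 1 - δ₁ := by linarith
  have e2 : (0:ℝ) < 1 - δ₂ := by linarith
  set W : Matrix (Fin 4) (Fin 4) ℝ :=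
    !![(μ+φ)⁻¹, 0, 0, 0; φ/((μ+φ)*(μ+γ)), (μ+γ)⁻¹, 0, 0;
       0, 0, (μ+φ)⁻¹, 0; 0, 0, φ/((μ+φ)*(μ+γ)), (μ+γ)⁻¹] with hW
  have hVW : V * W = 1 := by
    subst hV
    ext i j
    fin_cases i <;> fin_cases j <;>
      simp [hW, Matrix.mul_apply, Fin.sum_univ_four, Matrix.one_apply,
        Matrix.vecHead, Matrix.vecTail] <;> field_simp <;> ring
  have hWV : W * V = 1 := mul_eq_one_comm.mp hVW
  have hUnit : IsUnit V := isUnit_iff_exists.mpr ⟨W, hVW, hWV⟩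
  refine ⟨hUnit, ?_⟩
  have hVinv : V⁻¹ = W := Matrix.inv_eq_right_inv hVW
  -- entries of F * V⁻¹
  set x1 : ℝ := β * (1-δ₁) * (φ/((μ+φ)*(μ+γ))) with hx1
  set x2 : ℝ := β * (1-δ₁) * (μ+γ)⁻¹ with hx2
  set x3 : ℝ := β * α * (1-δ₁) * (φ/((μ+φ)*(μ+γ))) with hx3
  set x4 : ℝ := β * α * (1-δ₁) * (μ+γ)⁻¹ with hx4
  set y1 : ℝ := β * α * (1-δ₂) * (φ/((μ+φ)*(μ+γ))) with hy1
  set y2 : ℝ := β * α * (1-δ₂) * (μ+γ)⁻¹ with hy2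
  set y3 : ℝ := β * (1-δ₂) * (φ/((μ+φ)*(μ+γ))) with hy3
  set y4 : ℝ := β * (1-δ₂) * (μ+γ)⁻¹ with hy4
  have hM : F * V⁻¹ = !![x1, x2, x3, x4; 0,0,0,0; y1,y2,y3,y4; 0,0,0,0] := by
    rw [hVinv]
    subst hF
    ext i j
    fin_cases i <;> fin_cases j <;>
      simp [hW, hx1, hx2, hx3, hx4, hy1, hy2, hy3, hy4, Matrix.mul_apply,
        Fin.sum_univ_four, Matrix.vecHead, Matrix.vecTail] <;> ring
  have hMap : (F * V⁻¹).map (Complex.ofReal : ℝ → ℂ) =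
      !![(x1:ℂ), x2, x3, x4; 0,0,0,0; (y1:ℂ),y2,y3,y4; 0,0,0,0] := by
    rw [hM]
    ext i j
    fin_cases i <;> fin_cases j <;>
      simp [Matrix.map_apply, Matrix.vecHead, Matrix.vecTail]
  -- eigenvalue data
  set Δ : ℝ := 4 * α ^ 2 * (1 - δ₁) * (1 - δ₂) + (δ₁ - δ₂) ^ 2 with hΔdef
  have hΔ0 : 0 ≤ Δ := by
    have : 0 ≤ 4 * α ^ 2 * (1 - δ₁) * (1 - δ₂) := by positivity
    nlinarith [sq_nonneg (δ₁ - δ₂)]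
  set s : ℝ := Real.sqrt Δ with hsdef
  have hs0 : 0 ≤ s := Real.sqrt_nonneg _
  have hs2 : s ^ 2 = Δ := Real.sq_sqrt hΔ0
  set rp : ℝ := β * φ * ((1 - δ₁) + (1 - δ₂) + s) / (2 * (μ + φ) * (μ + γ)) with hrp
  set rm : ℝ := β * φ * ((1 - δ₁) + (1 - δ₂) - s) / (2 * (μ + φ) * (μ + γ)) with hrm
  have hsumR : x1 + y3 = rm + rp := by
    rw [hx1, hy3, hrm, hrp]; field_simp; ring
  have hprodR : x1 * y3 - x3 * y1 = rm * rp := by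
    rw [hx1, hy3, hx3, hy1, hrm, hrp]
    field_simp
    linear_combination hs2 + hΔdef
  have hsle : s ≤ (1 - δ₁) + (1 - δ₂) := by
    have hle : Δ ≤ ((1 - δ₁) + (1 - δ₂)) ^ 2 := by
      nlinarith [mul_nonneg (mul_nonneg e1.le e2.le)
        (mul_nonneg (by linarith : (0:ℝ) ≤ 1 - α) (by linarith : (0:ℝ) ≤ 1 + α))]
    calc s ≤ Real.sqrt (((1 - δ₁) + (1 - δ₂)) ^ 2) := Real.sqrt_le_sqrt hle
    _ = (1 - δ₁) + (1 - δ₂) := Real.sqrt_sq (by linarith)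
  have hrm0 : 0 ≤ rm := by
    rw [hrm]
    have : (0:ℝ) ≤ (1 - δ₁) + (1 - δ₂) - s := by linarith
    positivity
  have hrmle : rm ≤ rp := by
    rw [hrm, hrp]
    gcongr
    linarith
  have hspec : spectrum ℂ ((F * V⁻¹).map (Complex.ofReal : ℝ → ℂ)) =
      {0, (rm : ℂ), (rp : ℂ)} := by
    rw [hMap]
    apply spectrum_aux
    · exact_mod_cast congrArg (Complex.ofReal) hsumR
    · exact_mod_cast congrArg (Complex.ofReal) hprodR
  unfold spectralRadius
  rw [hspec]
  rw [show ({0, (rm:ℂ), (rp:ℂ)} : Set ℂ) = insert 0 (insert (rm:ℂ) {(rp:ℂ)}) from rfl]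
  rw [iSup_insert, iSup_insert, iSup_singleton]
  simp only [← enorm_eq_nnnorm, nnnorm_zero, Complex.nnnorm_real, ENNReal.coe_zero,
    Real.enorm_eq_ofReal hrm0, Real.enorm_eq_ofReal (hrm0.trans hrmle)]
  rw [sup_eq_right.mpr (ENNReal.ofReal_le_ofReal hrmle), sup_eq_right.mpr zero_le]
end

section
/- Write A = μ+γ, B = μ+φ, D₁ = 1-δ₁, D₂ = 1-δ₂, where μ, γ, φ, β > 0, α ∈ [0,1], δ₁, δ₂ ∈ [0,1), and let R_C = βφ(D₁ + D₂ + √((D₁-D₂)² + 4α²D₁D₂))/(2AB). If D_j·β·φ > A·B for some j ∈ {1,2}, then R_C > 1. -/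
/-- If `Dⱼ·βφ > AB` for some patch `j ∈ {1,2}`, then the control reproduction number
`R_C = βφ(D₁ + D₂ + √((D₁-D₂)² + 4α²D₁D₂))/(2AB)` satisfies `R_C > 1`. -/
theorem RC_gt_one_of_patch_above_threshold
    (μ γ φ β α δ₁ δ₂ A B D₁ D₂ RC : ℝ)
    (hμ : 0 < μ) (hγ : 0 < γ) (hφ : 0 < φ) (hβ : 0 < β)
    (hα : α ∈ Set.Icc (0 : ℝ) 1)
    (hδ₁ : δ₁ ∈ Set.Ico (0 : ℝ) 1) (hδ₂ : δ₂ ∈ Set.Ico (0 : ℝ) 1)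
    (hA : A = μ + γ) (hB : B = μ + φ) (hD₁ : D₁ = 1 - δ₁) (hD₂ : D₂ = 1 - δ₂)
    (hRC : RC = β * φ * (D₁ + D₂ + Real.sqrt ((D₁ - D₂) ^ 2 + 4 * α ^ 2 * D₁ * D₂)) /
      (2 * A * B))
    (hthresh : D₁ * β * φ > A * B ∨ D₂ * β * φ > A * B) :
    RC > 1 := by
  have hD1pos : 0 < D₁ := by rw [hD₁]; linarith [hδ₁.2]
  have hD2pos : 0 < D₂ := by rw [hD₂]; linarith [hδ₂.2]
  have hABpos : 0 < 2 * A * B := by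
    rw [hA, hB]; positivity
  have hs : |D₁ - D₂| ≤ Real.sqrt ((D₁ - D₂) ^ 2 + 4 * α ^ 2 * D₁ * D₂) := by
    rw [← Real.sqrt_sq_eq_abs]
    apply Real.sqrt_le_sqrt
    have : 0 ≤ 4 * α ^ 2 * D₁ * D₂ := by positivity
    linarith
  have h1 : D₁ - D₂ ≤ |D₁ - D₂| := le_abs_self _
  have h2' : D₂ - D₁ ≤ |D₁ - D₂| := by
    calc D₂ - D₁ = -(D₁ - D₂) := by ring
    _ ≤ |D₁ - D₂| := neg_le_abs _
  rw [hRC, gt_iff_lt, lt_div_iff₀ hABpos, one_mul]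
  rcases hthresh with h | h
  · nlinarith [hs, h1]
  · nlinarith [hs, h2']
end

section
/- Write A = μ+γ, B = μ+φ, D₁ = 1-δ₁, D₂ = 1-δ₂, where μ, γ, φ, β > 0, α ∈ [0,1], δ₁, δ₂ ∈ [0,1]. Then βφ(D₁ + D₂ + √((D₁-D₂)² + 4α²D₁D₂))/(2AB) ≥ βφ(D₁+D₂)(1+α)/(2AB); that is, the control reproduction number R_C with heterogeneous unvaccinated proportions (D₁, D₂) is greater than or equal to the control reproduction number with both patches at the homogeneous average coverage D* = (D₁+D₂)/2. -/
/-- Heterogeneous vaccination coverage increases the control reproduction number: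
`R_C(D₁, D₂) ≥ R_C(D*, D*)` where `D* = (D₁+D₂)/2`, i.e.
`βφ(D₁ + D₂ + √((D₁-D₂)² + 4α²D₁D₂))/(2AB) ≥ βφ(D₁+D₂)(1+α)/(2AB)`. -/
theorem RC_heterogeneous_ge_homogeneous
    (μ γ φ β α δ₁ δ₂ A B D₁ D₂ : ℝ)
    (hμ : 0 < μ) (hγ : 0 < γ) (hφ : 0 < φ) (hβ : 0 < β)
    (hα : α ∈ Set.Icc (0 : ℝ) 1)
    (hδ₁ : δ₁ ∈ Set.Icc (0 : ℝ) 1) (hδ₂ : δ₂ ∈ Set.Icc (0 : ℝ) 1)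
    (hA : A = μ + γ) (hB : B = μ + φ) (hD₁ : D₁ = 1 - δ₁) (hD₂ : D₂ = 1 - δ₂) :
    β * φ * (D₁ + D₂ + Real.sqrt ((D₁ - D₂) ^ 2 + 4 * α ^ 2 * D₁ * D₂)) /
      (2 * A * B) ≥ β * φ * (D₁ + D₂) * (1 + α) / (2 * A * B) := by
  obtain ⟨hα0, hα1⟩ := hα
  obtain ⟨h10, h11⟩ := hδ₁
  obtain ⟨h20, h21⟩ := hδ₂
  have hD1 : 0 ≤ D₁ := by simp [hD₁]; linarith
  have hD2 : 0 ≤ D₂ := by simp [hD₂]; linarith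
  have hden : 0 < 2 * A * B := by
    subst hA hB; positivity
  have hsqrt : α * (D₁ + D₂) ≤ Real.sqrt ((D₁ - D₂) ^ 2 + 4 * α ^ 2 * D₁ * D₂) := by
    rw [show (D₁ - D₂) ^ 2 + 4 * α ^ 2 * D₁ * D₂ =
        (α * (D₁ + D₂)) ^ 2 + (1 - α ^ 2) * (D₁ - D₂) ^ 2 by ring]
    have h1 : 0 ≤ (1 - α ^ 2) * (D₁ - D₂) ^ 2 := mul_nonneg (by nlinarith) (sq_nonneg _)
    calc α * (D₁ + D₂) ≤ Real.sqrt ((α * (D₁ + D₂)) ^ 2) := by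
          rw [Real.sqrt_sq (by positivity)]
      _ ≤ _ := Real.sqrt_le_sqrt (by linarith)
  rw [ge_iff_le, div_le_div_iff_of_pos_right hden]
  nlinarith [mul_pos hβ hφ]
end

section
/- Let β, μ, φ, γ > 0, α > 0, δ₁, δ₂ ∈ [0,1), and write A = μ+γ, B = μ+φ, D₂ = 1-δ₂. Suppose (s₁, e₁, i₁, s₂, e₂, i₂) is an equilibrium of the rescaled two-patch SEIR system (all six right-hand sides vanish) with Be₂ ≠ μD₂. Then e₁ = e₂(μ(βφD₂ - AB) - e₂βφB) / (αβφ(e₂B - μD₂)). -/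
/-- At any equilibrium of the rescaled two-patch SEIR system with `Be₂ ≠ μD₂`, the exposed
class of patch 1 is given by `e₁ = e₂(μ(βφD₂ - AB) - e₂βφB)/(αβφ(e₂B - μD₂))`, where
`A = μ+γ`, `B = μ+φ`, `D₂ = 1-δ₂`. -/
theorem equilibrium_e1_formula
    (β α μ φ γ δ₁ δ₂ A B D₂ : ℝ)
    (hβ : 0 < β) (hα : 0 < α) (hμ : 0 < μ) (hφ : 0 < φ) (hγ : 0 < γ)
    (hδ₁ : δ₁ ∈ Set.Ico (0 : ℝ) 1) (hδ₂ : δ₂ ∈ Set.Ico (0 : ℝ) 1)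
    (hA : A = μ + γ) (hB : B = μ + φ) (hD₂ : D₂ = 1 - δ₂)
    (s₁ e₁ i₁ s₂ e₂ i₂ : ℝ)
    (heq₁ : -β * s₁ * (i₁ + α * i₂) - μ * s₁ + (1 - δ₁) * μ = 0)
    (heq₂ : β * s₁ * (i₁ + α * i₂) - (μ + φ) * e₁ = 0)
    (heq₃ : φ * e₁ - (μ + γ) * i₁ = 0)
    (heq₄ : -β * s₂ * (i₂ + α * i₁) - μ * s₂ + (1 - δ₂) * μ = 0)
    (heq₅ : β * s₂ * (i₂ + α * i₁) - (μ + φ) * e₂ = 0)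
    (heq₆ : φ * e₂ - (μ + γ) * i₂ = 0)
    (hne : B * e₂ ≠ μ * D₂) :
    e₁ = e₂ * (μ * (β * φ * D₂ - A * B) - e₂ * β * φ * B) /
      (α * β * φ * (e₂ * B - μ * D₂)) := by
  subst hA hB hD₂
  have h4 : μ * s₂ = (1 - δ₂) * μ - (μ + φ) * e₂ := by linarith
  have hden : α * β * φ * (e₂ * (μ + φ) - μ * (1 - δ₂)) ≠ 0 := by
    apply mul_ne_zero (by positivity)
    intro h
    apply hne
    linarith [sub_eq_zero.mp h]
  rw [eq_div_iff hden]
  linear_combination (-(μ * (μ + γ))) * heq₅ - β * μ * s₂ * heq₆ - α * β * μ * s₂ * heq₃ +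
    β * φ * (e₂ + α * e₁) * h4
end
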